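/- arXiv:2201.03523 — 7 statements merged into one kernel-verified Lean document; each statement's English description precedes it below -/
import Mathlib

section
/- For every natural number n and every real number θ, max(|U_n(cos θ)|, |U_{n+1}(cos θ)|) ≥ 1/2, where U_n denotes the n-th Chebyshev polynomial of the second kind. -/
open Polynomial Chebyshev in
lemma chebyU_pell (x : ℝ) : ∀ n : ℕ,
    ((U ℝ (n + 1)).eval x)^2 - 2*x*((U ℝ n).eval x)*((U ℝ (n + 1)).eval x)
      + ((U ℝ n).eval x)^2 = 1 := by
  intro n
  induction n with
  | zero => simp [Polynomial.Chebyshev.U_one]; ring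
  | succ k ih =>
    have h : (U ℝ ((k : ℤ) + 2)) = 2 * X * U ℝ ((k:ℤ) + 1) - U ℝ k :=
      Polynomial.Chebyshev.U_add_two ℝ k
    push_cast
    have h2 : ((k:ℤ) + 1 + 1) = (k:ℤ) + 2 := by ring
    rw [h2, h]
    simp only [Polynomial.eval_sub, Polynomial.eval_mul, Polynomial.eval_ofNat,
      Polynomial.eval_X]
    push_cast at ih
    nlinarith [ih]

open Polynomial in
theorem max_chebyshevU_ge_half (n : ℕ) (θ : ℝ) :
    max |(Polynomial.Chebyshev.U ℝ n).eval (Real.cos θ)|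
      |(Polynomial.Chebyshev.U ℝ (n + 1)).eval (Real.cos θ)| ≥ 1 / 2 := by
  have h := chebyU_pell (Real.cos θ) n
  have hc : |Real.cos θ| ≤ 1 := Real.abs_cos_le_one θ
  set u := (Chebyshev.U ℝ (n:ℤ)).eval (Real.cos θ)
  set v := (Chebyshev.U ℝ ((n:ℤ) + 1)).eval (Real.cos θ)
  have cross : -(Real.cos θ * (u * v)) ≤ |u| * |v| := by
    calc -(Real.cos θ * (u * v)) ≤ |Real.cos θ * (u * v)| := neg_le_abs _
      _ = |Real.cos θ| * (|u| * |v|) := by rw [abs_mul, abs_mul]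
      _ ≤ 1 * (|u| * |v|) := by
          exact mul_le_mul_of_nonneg_right hc (by positivity)
      _ = |u| * |v| := one_mul _
  have key : |u| + |v| ≥ 1 := by
    nlinarith [abs_nonneg u, abs_nonneg v, sq_abs u, sq_abs v, cross]
  have h1 : |u| ≤ max |u| |v| := le_max_left _ _
  have h2 : |v| ≤ max |u| |v| := le_max_right _ _
  linarith
end

section
/- Let r be a natural number, θ : Fin r → ℝ, and α : Fin r → ℕ. Then there exists δ : Fin r → {0,1} such that ∏_{i} |U_{2·α(i) + δ(i)}(cos θ(i))|² ≥ 4^{−r}, where U_n denotes the n-th Chebyshev polynomial of the second kind. -/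
open Polynomial Real

lemma chebyshevU_key (n : ℤ) (x : ℝ) :
    (1/4 : ℝ) ≤ ((Polynomial.Chebyshev.U ℝ n).eval (Real.cos x))^2 ∨
    (1/4 : ℝ) ≤ ((Polynomial.Chebyshev.U ℝ (n+1)).eval (Real.cos x))^2 := by
  by_contra h
  push_neg at h
  obtain ⟨ha, hb⟩ := h
  set a := (Polynomial.Chebyshev.U ℝ n).eval (Real.cos x) with ha'
  set b := (Polynomial.Chebyshev.U ℝ (n+1)).eval (Real.cos x) with hb'
  set c := Real.cos x
  set s := Real.sin x
  have h1 : b = c * a + Real.cos ((n+1) * x) := by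
    rw [hb', Polynomial.Chebyshev.U_eq_X_mul_U_add_T]
    have := Polynomial.Chebyshev.T_real_cos x (n+1)
    push_cast at this ⊢
    simp [ha', c, this]
  have h2 : (Real.cos ((n+1)*x))^2 + (a * s)^2 = 1 := by
    rw [ha', Polynomial.Chebyshev.U_real_cos, Real.cos_sq_add_sin_sq]
  have h3 : s^2 + c^2 = 1 := Real.sin_sq_add_cos_sq x
  set t := Real.cos ((n+1)*x) with ht'
  have ht : t = b - c * a := by linarith
  rw [ht] at h2
  nlinarith [sq_nonneg (a + b*c), sq_nonneg (a - b*c), sq_nonneg (s*a), sq_nonneg (s*b), sq_nonneg s]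

theorem exists_delta_prod_chebyshevU_sq_ge (r : ℕ) (θ : Fin r → ℝ) (α : Fin r → ℕ) :
    ∃ δ : Fin r → ℕ, (∀ i, δ i ≤ 1) ∧
      ∏ i : Fin r,
        |(Polynomial.Chebyshev.U ℝ (2 * α i + δ i)).eval (Real.cos (θ i))| ^ 2
        ≥ ((4 : ℝ) ^ r)⁻¹ := by
  refine ⟨fun i => if (1/4 : ℝ) ≤ ((Polynomial.Chebyshev.U ℝ (2 * α i)).eval (Real.cos (θ i)))^2 then 0 else 1,
    fun i => by dsimp only; split <;> simp, ?_⟩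
  have key : ∀ i : Fin r, (1/4 : ℝ) ≤
      |(Polynomial.Chebyshev.U ℝ (2 * α i + (if (1/4 : ℝ) ≤ ((Polynomial.Chebyshev.U ℝ (2 * α i)).eval (Real.cos (θ i)))^2 then 0 else 1 : ℕ))).eval (Real.cos (θ i))| ^ 2 := by
    intro i
    split
    · rw [sq_abs]
      simp only [Nat.cast_zero, add_zero]
      exact ‹_›
    · rw [sq_abs]
      simp only [Nat.cast_one]
      rcases chebyshevU_key (2 * (α i : ℤ)) (θ i) with h | h
      · exact absurd (by exact_mod_cast h) ‹_›
      · exact h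
  calc ((4 : ℝ) ^ r)⁻¹ = ∏ _i : Fin r, (1/4 : ℝ) := by
        simp [Finset.prod_const, ← inv_pow]
      _ ≤ _ := Finset.prod_le_prod (fun i _ => by norm_num) (fun i _ => key i)
end

section
/- Let p be a prime and let m, n be natural numbers. Then ∫_0^π U_n(cos θ)·U_m(cos θ) · (2/π)·((p+1)·sin²θ)/((p^{1/2} + p^{−1/2})² − 4·cos²θ) dθ equals (p/(p−1))·(p^{−|m−n|/2} − p^{−(m+n)/2 − 1}) if m ≡ n (mod 2), and equals 0 otherwise. Here U_n denotes the n-th Chebyshev polynomial of the second kind. -/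
open Real Complex in
lemma geom_cos (r : ℝ) (hr : |r| < 1) (x : ℝ) :
    HasSum (fun k : ℕ => r^k * Real.cos (k*x))
      ((1 - r*Real.cos x)/(1 - 2*r*Real.cos x + r^2)) := by
  set z : ℂ := r * Complex.exp (x * Complex.I) with hz
  have hnz : ‖z‖ < 1 := by
    rw [hz, norm_mul, Complex.norm_real, Complex.norm_exp_ofReal_mul_I]
    simpa using hr
  have h1 : HasSum (fun k : ℕ => z ^ k) (1 - z)⁻¹ := hasSum_geometric_of_norm_lt_one hnz
  have h2 := Complex.reCLM.hasSum h1
  have h3 : ∀ k : ℕ, Complex.reCLM (z ^ k) = r^k * Real.cos (k*x) := by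
    intro k
    rw [hz, mul_pow, ← Complex.exp_nat_mul]
    simp only [Complex.reCLM_apply, ← Complex.ofReal_pow]
    rw [show ((k:ℂ) * (↑x * Complex.I)) = ((k * x : ℝ) : ℂ) * Complex.I by push_cast; ring]
    rw [Complex.re_ofReal_mul, Complex.exp_ofReal_mul_I_re]
  have hre : (1 - z).re = 1 - r * Real.cos x := by
    simp [hz, Complex.sub_re, Complex.re_ofReal_mul, Complex.exp_ofReal_mul_I_re]
  have him : (1 - z).im = -(r * Real.sin x) := by
    simp [hz, Complex.sub_im, Complex.im_ofReal_mul, Complex.exp_ofReal_mul_I_im]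
  have h4 : Complex.reCLM ((1 - z)⁻¹) = (1 - r*Real.cos x)/(1 - 2*r*Real.cos x + r^2) := by
    simp only [Complex.reCLM_apply, Complex.inv_re, Complex.normSq_apply, hre, him]
    congr 1
    nlinarith [Real.sin_sq_add_cos_sq x]
  rw [← h4]
  exact h2.congr_fun fun k => (h3 k).symm

open Real intervalIntegral in
lemma intcos (c : ℤ) : ∫ θ in (0:ℝ)..π, Real.cos (c*θ) = if c = 0 then π else 0 := by
  rcases eq_or_ne c 0 with h | h
  · simp [h]
  · rw [if_neg h]
    have hc : (c:ℝ) ≠ 0 := Int.cast_ne_zero.mpr h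
    rw [intervalIntegral.integral_comp_mul_left (fun x => Real.cos x) hc, integral_cos]
    simp [Real.sin_int_mul_pi]

open Real in
lemma orth (c k : ℕ) :
    ∫ θ in (0:ℝ)..π, Real.cos (c*θ) * Real.cos (2*(k+1)*θ)
      = if c = 2*(k+1) then π/2 else 0 := by
  have hcc : ∀ θ : ℝ, Real.cos (c*θ) * Real.cos (2*(k+1)*θ)
      = (Real.cos ((((c:ℤ) - 2*(k+1)) : ℤ) * θ) + Real.cos ((((c:ℤ) + 2*(k+1)) : ℤ) * θ))/2 := by
    intro θ
    push_cast
    rw [show ((c:ℝ) - 2*((k:ℝ)+1)) * θ = c*θ - 2*((k:ℝ)+1)*θ by ring,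
      show ((c:ℝ) + 2*((k:ℝ)+1)) * θ = c*θ + 2*((k:ℝ)+1)*θ by ring,
      Real.cos_sub, Real.cos_add]
    ring
  simp_rw [hcc]
  rw [intervalIntegral.integral_div]
  rw [intervalIntegral.integral_add (Continuous.intervalIntegrable (by continuity) _ _)
    (Continuous.intervalIntegrable (by continuity) _ _)]
  rw [intcos, intcos]
  have h2 : ((c:ℤ) + 2*(k+1)) ≠ 0 := by positivity
  rw [if_neg h2]
  rcases eq_or_ne c (2*(k+1)) with h | h
  · rw [if_pos h, if_pos (by omega)]
    ring
  · rw [if_neg h, if_neg (by omega)]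
    ring

open Real MeasureTheory in
lemma key (r : ℝ) (hr0 : 0 < r) (hr1 : r < 1) (c : ℕ) :
    ∫ θ in (0:ℝ)..π, Real.cos (c*θ) / (1 - 2*r*Real.cos (2*θ) + r^2)
      = (if c % 2 = 0 then π * r^(c/2) else 0) / (1 - r^2) := by
  have habs : |r| < 1 := by rw [abs_of_pos hr0]; exact hr1
  have hr2 : (0:ℝ) < 1 - r^2 := by nlinarith
  have hD : ∀ θ : ℝ, 0 < 1 - 2*r*Real.cos (2*θ) + r^2 := by
    intro θ
    nlinarith [Real.cos_le_one (2*θ), Real.neg_one_le_cos (2*θ)]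
  have hDc : Continuous fun θ : ℝ => 1 - 2*r*Real.cos (2*θ) + r^2 := by continuity
  -- shifted geometric series
  have hser : ∀ θ : ℝ, HasSum (fun k : ℕ => r^(k+1) * Real.cos (2*(k+1)*θ))
      ((1 - r*Real.cos (2*θ))/(1 - 2*r*Real.cos (2*θ) + r^2) - 1) := by
    intro θ
    have h := geom_cos r habs (2*θ)
    have h' : HasSum (fun k : ℕ => r^(k+1) * Real.cos ((k+1:ℕ)*(2*θ)))
        ((1 - r*Real.cos (2*θ))/(1 - 2*r*Real.cos (2*θ) + r^2) - 1) :=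
      (hasSum_nat_add_iff (f := fun k : ℕ => r^k * Real.cos (k*(2*θ))) 1).mpr (by simpa using h)
    refine h'.congr_fun fun k => ?_
    push_cast
    rw [show (2*((k:ℝ)+1)*θ) = ((k:ℝ)+1)*(2*θ) by ring]
  have hpt : ∀ θ : ℝ, Real.cos (c*θ) / (1 - 2*r*Real.cos (2*θ) + r^2)
      = (1/(1-r^2)) * Real.cos (c*θ)
        + (2/(1-r^2)) * (Real.cos (c*θ) *
            ((1 - r*Real.cos (2*θ))/(1 - 2*r*Real.cos (2*θ) + r^2) - 1)) := by
    intro θ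
    have h1 := (hD θ).ne'
    generalize Real.cos (2*θ) = y at h1 ⊢
    field_simp
    ring
  simp_rw [hpt]
  rw [intervalIntegral.integral_add
      (Continuous.intervalIntegrable (by continuity) _ _)
      (Continuous.intervalIntegrable
        (by exact (continuous_const.mul ((Real.continuous_cos.comp (by continuity)).mul
          (((continuous_const.sub (continuous_const.mul (Real.continuous_cos.comp (by continuity)))).div
            hDc (fun θ => (hD θ).ne')).sub continuous_const)))) _ _),
    intervalIntegral.integral_const_mul, intervalIntegral.integral_const_mul]
  have intcosN : ∫ θ in (0:ℝ)..π, Real.cos (c*θ) = if c = 0 then π else 0 := by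
    have := intcos (c:ℤ)
    simpa using this
  rw [intcosN]
  -- interchange sum and integral for the second piece
  set F : ℕ → ℝ → ℝ := fun k θ => Real.cos (c*θ) * (r^(k+1) * Real.cos (2*(k+1)*θ)) with hF
  have hFc : ∀ k, Continuous (F k) := by
    intro k; exact (Real.continuous_cos.comp (by continuity)).mul
      (continuous_const.mul (Real.continuous_cos.comp (by continuity)))
  have hswap : ∫ θ in (0:ℝ)..π, Real.cos (c*θ) *
      ((1 - r*Real.cos (2*θ))/(1 - 2*r*Real.cos (2*θ) + r^2) - 1)
      = ∑' k : ℕ, ∫ θ in (0:ℝ)..π, F k θ := by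
    rw [intervalIntegral.integral_of_le Real.pi_pos.le]
    have hG : ∀ θ : ℝ, Real.cos (c*θ) *
        ((1 - r*Real.cos (2*θ))/(1 - 2*r*Real.cos (2*θ) + r^2) - 1) = ∑' k : ℕ, F k θ := by
      intro θ
      exact (((hser θ).mul_left (Real.cos (c*θ))).tsum_eq).symm
    simp_rw [hG]
    rw [← MeasureTheory.integral_tsum_of_summable_integral_norm
      (fun k => ((hFc k).integrableOn_Ioc))
      ?_]
    · exact tsum_congr fun k => (intervalIntegral.integral_of_le Real.pi_pos.le).symm
    · have hb : ∀ k : ℕ, ∫ a in Set.Ioc (0:ℝ) π, ‖F k a‖ ≤ π * r^(k+1) := by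
        intro k
        have hle : ∀ a : ℝ, ‖F k a‖ ≤ r^(k+1) := by
          intro a
          have h1 : |Real.cos (c*a)| ≤ 1 := Real.abs_cos_le_one _
          have h2 : |Real.cos (2*(k+1)*a)| ≤ 1 := Real.abs_cos_le_one _
          have h3 : (0:ℝ) < r^(k+1) := pow_pos hr0 _
          rw [hF]
          simp only [Real.norm_eq_abs, abs_mul, abs_of_pos h3]
          calc |Real.cos (c*a)| * (r^(k+1) * |Real.cos (2*(k+1)*a)|)
              ≤ 1 * (r^(k+1) * 1) := by
                apply mul_le_mul h1 ?_ (by positivity) zero_le_one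
                exact mul_le_mul le_rfl h2 (abs_nonneg _) h3.le
            _ = r^(k+1) := by ring
        calc ∫ a in Set.Ioc (0:ℝ) π, ‖F k a‖
            ≤ ∫ _a in Set.Ioc (0:ℝ) π, r^(k+1) := by
              apply MeasureTheory.integral_mono ((hFc k).norm.integrableOn_Ioc)
                (MeasureTheory.integrableOn_const measure_Ioc_lt_top.ne)
              exact fun a => hle a
          _ = π * r^(k+1) := by
              rw [MeasureTheory.setIntegral_const, Real.volume_real_Ioc_of_le Real.pi_pos.le, smul_eq_mul,
                show π - (0:ℝ) = π from sub_zero π]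
      apply Summable.of_nonneg_of_le
        (fun k => MeasureTheory.integral_nonneg fun a => norm_nonneg _) hb
      exact ((summable_geometric_of_lt_one hr0.le hr1).mul_left (π*r)).congr fun k => by ring
  rw [hswap]
  have hterm : ∀ k : ℕ, (∫ θ in (0:ℝ)..π, F k θ)
      = r^(k+1) * (if c = 2*(k+1) then π/2 else 0) := by
    intro k
    have : ∀ θ : ℝ, F k θ = r^(k+1) * (Real.cos (c*θ) * Real.cos (2*(k+1)*θ)) := by
      intro θ; rw [hF]; ring
    simp_rw [this]
    rw [intervalIntegral.integral_const_mul, orth]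
  simp_rw [hterm]
  by_cases hc0 : c = 0
  · subst hc0
    have hz : ∀ k : ℕ, r^(k+1) * (if (0:ℕ) = 2*(k+1) then π/2 else 0) = 0 := by
      intro k; rw [if_neg (by omega)]; ring
    rw [tsum_congr hz, tsum_zero]
    norm_num [inv_mul_eq_div]
  · by_cases hpar : c % 2 = 0
    · obtain ⟨j, hj⟩ : ∃ j, c = 2*(j+1) := ⟨c/2 - 1, by omega⟩
      rw [tsum_eq_single j (fun k hk => by rw [if_neg (by omega)]; ring)]
      rw [if_pos hj, if_neg hc0, if_pos hpar,
        show c/2 = j+1 by omega, mul_zero, zero_add]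
      rw [div_mul_eq_mul_div, div_eq_div_iff hr2.ne' hr2.ne']
      ring
    · have hz : ∀ k : ℕ, r^(k+1) * (if c = 2*(k+1) then π/2 else 0) = 0 := by
        intro k; rw [if_neg (by omega)]; ring
      rw [tsum_congr hz, tsum_zero, if_neg hc0, if_neg hpar]
      simp

open Real in
theorem chebyshevU_plancherel_inner_product (p : ℕ) (hp : p.Prime) (m n : ℕ) :
    ∫ θ in (0:ℝ)..π,
        (Polynomial.Chebyshev.U ℝ n).eval (cos θ) * (Polynomial.Chebyshev.U ℝ m).eval (cos θ) *
          ((2 / π) * (((p : ℝ) + 1) * sin θ ^ 2) /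
            (((p : ℝ) ^ ((1 : ℝ) / 2) + (p : ℝ) ^ (-(1 : ℝ) / 2)) ^ 2 - 4 * cos θ ^ 2))
      = if m % 2 = n % 2 then
          ((p : ℝ) / ((p : ℝ) - 1)) *
            ((p : ℝ) ^ (-(|(m : ℝ) - (n : ℝ)| / 2)) - (p : ℝ) ^ (-(((m : ℝ) + (n : ℝ)) / 2) - 1))
        else 0 := by
  have hp2 : 2 ≤ p := hp.two_le
  have hp2' : (2:ℝ) ≤ (p:ℝ) := by exact_mod_cast hp2
  have hp0 : (0:ℝ) < p := by linarith
  set r : ℝ := ((p:ℝ))⁻¹ with hrdef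
  have hr0 : 0 < r := inv_pos.mpr hp0
  have hr1 : r < 1 := by
    rw [hrdef]
    rw [inv_lt_one_iff₀]
    right; linarith
  set d : ℕ := Nat.dist m n with hddef
  set s : ℕ := m + n + 2 with hsdef
  set C : ℝ := ((p:ℝ)+1)/((p:ℝ)*π) with hCdef
  have hπ : π ≠ 0 := Real.pi_ne_zero
  -- rpow facts
  have hA : ((p:ℝ) ^ ((1:ℝ)/2))^2 = p := by
    rw [← Real.rpow_natCast ((p:ℝ) ^ ((1:ℝ)/2)) 2, ← Real.rpow_mul hp0.le]
    norm_num
  have hApos : 0 < (p:ℝ) ^ ((1:ℝ)/2) := Real.rpow_pos_of_pos hp0 _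
  have hB : (p:ℝ) ^ (-(1:ℝ)/2) = ((p:ℝ) ^ ((1:ℝ)/2))⁻¹ := by
    rw [neg_div, Real.rpow_neg hp0.le]
  -- denominator identity
  have hden : ∀ θ : ℝ, ((p:ℝ) ^ ((1:ℝ)/2) + (p:ℝ) ^ (-(1:ℝ)/2))^2 - 4 * Real.cos θ ^ 2
      = (p:ℝ) * (1 - 2*r*Real.cos (2*θ) + r^2) := by
    intro θ
    have hAne : (p:ℝ)^((1:ℝ)/2) ≠ 0 := hApos.ne'
    have expand : ((p:ℝ)^((1:ℝ)/2) + ((p:ℝ)^((1:ℝ)/2))⁻¹)^2 = (p:ℝ) + 2 + ((p:ℝ))⁻¹ := by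
      rw [add_sq, mul_assoc, mul_inv_cancel₀ hAne, inv_pow, hA]
      ring
    rw [hB, expand, Real.cos_two_mul, hrdef]
    field_simp
    ring
  have hD : ∀ θ : ℝ, 0 < 1 - 2*r*Real.cos (2*θ) + r^2 := by
    intro θ
    nlinarith [Real.cos_le_one (2*θ), Real.neg_one_le_cos (2*θ)]
  -- cosine distance fact
  have hdist : ((d:ℕ):ℝ) = |(m:ℝ) - (n:ℝ)| := by
    rcases le_total m n with h | h
    · rw [hddef, Nat.dist_eq_sub_of_le h, abs_of_nonpos (by
        simp only [sub_nonpos]; exact_mod_cast h)]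
      push_cast [h]
      ring
    · rw [hddef, Nat.dist_eq_sub_of_le_right h, abs_of_nonneg (by
        simp only [sub_nonneg]; exact_mod_cast h)]
      push_cast [h]
      ring
  have hcosd : ∀ θ : ℝ, Real.cos (((n:ℝ) - (m:ℝ))*θ) = Real.cos ((d:ℝ)*θ) := by
    intro θ
    rcases abs_choice ((m:ℝ) - (n:ℝ)) with h | h
    · rw [hdist, h, show ((m:ℝ)-n)*θ = -(((n:ℝ)-m)*θ) by ring, Real.cos_neg]
    · rw [hdist, h]
      ring_nf
  -- pointwise integrand identity
  have hpt : ∀ θ : ℝ,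
      (Polynomial.Chebyshev.U ℝ n).eval (Real.cos θ) * (Polynomial.Chebyshev.U ℝ m).eval (Real.cos θ) *
          ((2 / π) * (((p : ℝ) + 1) * Real.sin θ ^ 2) /
            (((p : ℝ) ^ ((1 : ℝ) / 2) + (p : ℝ) ^ (-(1 : ℝ) / 2)) ^ 2 - 4 * Real.cos θ ^ 2))
      = C * (Real.cos ((d:ℝ)*θ) / (1 - 2*r*Real.cos (2*θ) + r^2))
        - C * (Real.cos ((s:ℝ)*θ) / (1 - 2*r*Real.cos (2*θ) + r^2)) := by
    intro θ
    have hU1 := Polynomial.Chebyshev.U_real_cos θ (n:ℤ)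
    have hU2 := Polynomial.Chebyshev.U_real_cos θ (m:ℤ)
    have hprod : (Polynomial.Chebyshev.U ℝ n).eval (Real.cos θ) *
        (Polynomial.Chebyshev.U ℝ m).eval (Real.cos θ) * Real.sin θ^2
        = (Real.cos ((d:ℝ)*θ) - Real.cos ((s:ℝ)*θ))/2 := by
      have h1 : (Polynomial.Chebyshev.U ℝ n).eval (Real.cos θ) *
          (Polynomial.Chebyshev.U ℝ m).eval (Real.cos θ) * Real.sin θ^2
          = Real.sin (((n:ℝ)+1)*θ) * Real.sin (((m:ℝ)+1)*θ) := by
        push_cast at hU1 hU2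
        rw [show (Polynomial.Chebyshev.U ℝ n).eval (Real.cos θ) *
          (Polynomial.Chebyshev.U ℝ m).eval (Real.cos θ) * Real.sin θ^2
          = ((Polynomial.Chebyshev.U ℝ (n:ℤ)).eval (Real.cos θ) * Real.sin θ) *
            ((Polynomial.Chebyshev.U ℝ (m:ℤ)).eval (Real.cos θ) * Real.sin θ) by ring,
          hU1, hU2]
      rw [h1, ← hcosd θ]
      rw [show ((n:ℝ)-m)*θ = ((n:ℝ)+1)*θ - ((m:ℝ)+1)*θ by ring,
        show ((s:ℝ))*θ = ((n:ℝ)+1)*θ + ((m:ℝ)+1)*θ by rw [hsdef]; push_cast; ring,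
        Real.cos_sub, Real.cos_add]
      ring
    rw [hden θ]
    have hDθ := (hD θ).ne'
    rw [show C * (Real.cos ((d:ℝ)*θ) / (1 - 2*r*Real.cos (2*θ) + r^2))
        - C * (Real.cos ((s:ℝ)*θ) / (1 - 2*r*Real.cos (2*θ) + r^2))
        = C * ((Real.cos ((d:ℝ)*θ) - Real.cos ((s:ℝ)*θ)) / (1 - 2*r*Real.cos (2*θ) + r^2)) by ring,
      show Real.cos ((d:ℝ)*θ) - Real.cos ((s:ℝ)*θ)
        = 2 * ((Polynomial.Chebyshev.U ℝ n).eval (Real.cos θ) *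
            (Polynomial.Chebyshev.U ℝ m).eval (Real.cos θ) * Real.sin θ^2) by rw [hprod]; ring,
      hCdef]
    field_simp
  simp_rw [hpt]
  have hDc : Continuous fun θ : ℝ => 1 - 2*r*Real.cos (2*θ) + r^2 :=
    (continuous_const.sub (continuous_const.mul
      (Real.continuous_cos.comp (continuous_const.mul continuous_id)))).add continuous_const
  have hc1 : ∀ c : ℕ, IntervalIntegrable
      (fun θ : ℝ => C * (Real.cos ((c:ℝ)*θ) / (1 - 2*r*Real.cos (2*θ) + r^2)))
      MeasureTheory.volume 0 π := by
    intro c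
    exact (continuous_const.mul ((Real.continuous_cos.comp
      (continuous_const.mul continuous_id)).div hDc
      fun θ => (hD θ).ne')).intervalIntegrable _ _
  rw [intervalIntegral.integral_sub (hc1 d) (hc1 s),
    intervalIntegral.integral_const_mul, intervalIntegral.integral_const_mul,
    key r hr0 hr1 d, key r hr0 hr1 s]
  have hd2 : d % 2 = (m + n) % 2 := by
    rcases le_total m n with h | h
    · rw [hddef, Nat.dist_eq_sub_of_le h]; omega
    · rw [hddef, Nat.dist_eq_sub_of_le_right h]; omega
  have h1r : (1:ℝ) - r^2 ≠ 0 := by nlinarith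
  have hp1 : (p:ℝ) - 1 ≠ 0 := by linarith
  by_cases hmn : m % 2 = n % 2
  · rw [if_pos hmn, if_pos (show d % 2 = 0 by omega), if_pos (show s % 2 = 0 by rw [hsdef]; omega)]
    have e1 : (p:ℝ) ^ (-(|(m:ℝ)-(n:ℝ)|/2)) = r^(d/2) := by
      rw [← hdist]
      have hh : -(((d:ℕ):ℝ)/2) = -(((d/2 : ℕ):ℝ)) := by
        have : 2 * (d/2) = d := by omega
        have : ((d/2 : ℕ):ℝ) * 2 = ((d:ℕ):ℝ) := by exact_mod_cast (by omega : d/2*2 = d)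
        rw [neg_div'] at *
        rw [← this]
        ring
      rw [hh, Real.rpow_neg hp0.le, Real.rpow_natCast, hrdef, inv_pow]
    have e2 : (p:ℝ) ^ (-(((m:ℝ)+(n:ℝ))/2) - 1) = r^(s/2) := by
      have hcast : -(((m:ℝ)+(n:ℝ))/2) - 1 = -(((s/2 : ℕ):ℝ)) := by
        have h1 : (s/2 : ℕ) = (m+n)/2 + 1 := by omega
        have h2 : ((((m+n)/2 : ℕ)):ℝ) * 2 = (m:ℝ) + (n:ℝ) := by
          exact_mod_cast (by omega : (m+n)/2*2 = m+n)
        rw [h1]; push_cast; linarith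
      rw [hcast, Real.rpow_neg hp0.le, Real.rpow_natCast, hrdef, inv_pow]
    rw [e1, e2]
    have hfac : ∀ x : ℝ, C * (π * x/(1-r^2)) = (p:ℝ)/((p:ℝ)-1) * x := by
      intro x
      have h1r' : 1 - ((p:ℝ)⁻¹)^2 ≠ 0 := by rw [← hrdef]; exact h1r
      rw [hCdef, hrdef]
      field_simp
      have hq : (0:ℝ) < (p:ℝ)^2 - 1 := by nlinarith
      have ht : (0:ℝ) < -((p:ℝ)*π) + (p:ℝ)^3*π := by
        nlinarith [mul_pos (mul_pos hp0 Real.pi_pos) hq]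
      field_simp [ht.ne']
      ring
    rw [hfac, hfac]
    ring
  · rw [if_neg hmn, if_neg (show ¬ d % 2 = 0 by omega),
      if_neg (show ¬ s % 2 = 0 by rw [hsdef]; omega)]
    simp
end

section
/- Let p be a prime and T a natural number. Then ((p+1)/(4π)) · ∫_0^π cos(2Tθ) / ((p−1)²/(4p) + sin²θ) dθ = p / ((p−1)·p^T). -/
open Real

lemma integral_inv_quad (k : ℝ) (hk : 0 < k) :
    ∫ θ in (0:ℝ)..π, k / (cos θ ^ 2 + k ^ 2 * sin θ ^ 2) = π := by
  have hvpos : ∀ θ : ℝ, 0 < cos θ ^ 2 + k * sin θ ^ 2 := by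
    intro θ
    rcases eq_or_ne (sin θ) 0 with h | h
    · have : cos θ ^ 2 = 1 := by
        have := sin_sq_add_cos_sq θ; rw [h] at this; simpa using this
      simp [h, this]
    · positivity
  have hwpos : ∀ θ : ℝ, 0 < cos θ ^ 2 + k ^ 2 * sin θ ^ 2 := by
    intro θ
    rcases eq_or_ne (sin θ) 0 with h | h
    · have : cos θ ^ 2 = 1 := by
        have := sin_sq_add_cos_sq θ; rw [h] at this; simpa using this
      simp [h, this]
    · positivity
  set G : ℝ → ℝ := fun θ => θ + arctan ((k - 1) * (sin θ * cos θ) / (cos θ ^ 2 + k * sin θ ^ 2)) with hGdef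
  have hderiv : ∀ θ : ℝ, HasDerivAt G (k / (cos θ ^ 2 + k ^ 2 * sin θ ^ 2)) θ := by
    intro θ
    have h1 : sin θ ^ 2 + cos θ ^ 2 = 1 := sin_sq_add_cos_sq θ
    have hu : HasDerivAt (fun θ : ℝ => (k - 1) * (sin θ * cos θ))
        ((k - 1) * (cos θ ^ 2 - sin θ ^ 2)) θ := by
      have := ((hasDerivAt_sin θ).mul (hasDerivAt_cos θ)).const_mul (k - 1)
      exact this.congr_deriv (by ring)
    have hv : HasDerivAt (fun θ : ℝ => cos θ ^ 2 + k * sin θ ^ 2)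
        (2 * cos θ * (-sin θ) + k * (2 * sin θ * cos θ)) θ := by
      have h2 : HasDerivAt (fun θ : ℝ => cos θ ^ 2) (2 * cos θ * (-sin θ)) θ := by
        have := (hasDerivAt_cos θ).pow 2
        exact this.congr_deriv (by ring)
      have h3 : HasDerivAt (fun θ : ℝ => k * sin θ ^ 2) (k * (2 * sin θ * cos θ)) θ := by
        have := ((hasDerivAt_sin θ).pow 2).const_mul k
        exact this.congr_deriv (by ring)
      exact h2.add h3
    have hvne : cos θ ^ 2 + k * sin θ ^ 2 ≠ 0 := (hvpos θ).ne'
    have hq := hu.div hv hvne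
    have ha := (Real.hasDerivAt_arctan ((k - 1) * (sin θ * cos θ) / (cos θ ^ 2 + k * sin θ ^ 2))).comp θ hq
    have hG := (hasDerivAt_id θ).add ha
    refine hG.congr_deriv ?_
    symm
    have hwne : cos θ ^ 2 + k ^ 2 * sin θ ^ 2 ≠ 0 := (hwpos θ).ne'
    have hx : (1:ℝ) + ((k - 1) * (sin θ * cos θ) / (cos θ ^ 2 + k * sin θ ^ 2)) ^ 2
        = (cos θ ^ 2 + k ^ 2 * sin θ ^ 2) / (cos θ ^ 2 + k * sin θ ^ 2) ^ 2 := by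
      field_simp
      linear_combination (cos θ ^ 2 + k ^ 2 * sin θ ^ 2) * h1
    rw [hx]
    rw [one_div_div]
    have hN : ((k - 1) * (cos θ ^ 2 - sin θ ^ 2) * (cos θ ^ 2 + k * sin θ ^ 2) -
        (k - 1) * (sin θ * cos θ) * (2 * cos θ * -sin θ + k * (2 * sin θ * cos θ)))
        = (k - 1) * (cos θ ^ 2 - k * sin θ ^ 2) := by
      linear_combination ((k - 1) * (cos θ ^ 2 - k * sin θ ^ 2)) * h1
    rw [hN]
    have e2 : (cos θ ^ 2 + k * sin θ ^ 2) ^ 2 / (cos θ ^ 2 + k ^ 2 * sin θ ^ 2) *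
        ((k - 1) * (cos θ ^ 2 - k * sin θ ^ 2) / (cos θ ^ 2 + k * sin θ ^ 2) ^ 2)
        = (k - 1) * (cos θ ^ 2 - k * sin θ ^ 2) / (cos θ ^ 2 + k ^ 2 * sin θ ^ 2) := by
      rw [div_mul_div_comm]
      rw [mul_comm ((cos θ ^ 2 + k * sin θ ^ 2) ^ 2)]
      rw [mul_div_mul_right _ _ (pow_ne_zero 2 hvne)]
    rw [e2]
    field_simp
    linear_combination ((k - 1) * (cos θ ^ 2 - k * sin θ ^ 2) + k + (cos θ ^ 2 - 2 * k - k * sin θ ^ 2 - k * cos θ ^ 2 + k ^ 2 * sin θ ^ 2)) * h1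
  have hint : IntervalIntegrable (fun θ : ℝ => k / (cos θ ^ 2 + k ^ 2 * sin θ ^ 2)) MeasureTheory.volume 0 π := by
    apply Continuous.intervalIntegrable
    exact continuous_const.div (by continuity) (fun x => (hwpos x).ne')
  have := intervalIntegral.integral_eq_sub_of_hasDerivAt (fun θ _ => hderiv θ) hint
  rw [this]
  simp [hGdef, Real.sin_pi]

lemma integral_cos_mul_eq (a : ℝ) (ha : a ≠ 0) :
    ∫ θ in (0:ℝ)..π, cos (a * θ) = sin (a * π) / a := by
  have h := intervalIntegral.integral_comp_mul_left (c := a) (f := cos) (a := 0) (b := π) ha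
  rw [h, integral_cos]
  simp [smul_eq_mul]
  ring

lemma integral_cos_two_mul (m : ℕ) (hm : 0 < m) :
    ∫ θ in (0:ℝ)..π, cos (2 * (m : ℝ) * θ) = 0 := by
  have ha : (2 * (m : ℝ)) ≠ 0 := by positivity
  rw [integral_cos_mul_eq _ ha]
  have : (2 * (m : ℝ)) * π = ((2 * m : ℕ) : ℝ) * π := by push_cast; ring
  rw [this, Real.sin_nat_mul_pi]
  simp

section Jlemmas

variable (q : ℝ)

lemma denom_pos (hq : 1 < q) (θ : ℝ) : 0 < (q - 1) ^ 2 / (4 * q) + sin θ ^ 2 := by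
  have h1 : 0 < (q - 1) ^ 2 / (4 * q) := by
    apply div_pos (pow_pos (by linarith) 2) (by linarith)
  nlinarith [sq_nonneg (sin θ)]

lemma cont_integrand (hq : 1 < q) (f : ℝ → ℝ) (hf : Continuous f) :
    Continuous (fun θ : ℝ => f θ / ((q - 1) ^ 2 / (4 * q) + sin θ ^ 2)) := by
  exact hf.div (by continuity) (fun θ => (denom_pos q hq θ).ne')

lemma cont_cos (a : ℝ) : Continuous fun θ : ℝ => cos (a * θ) := by fun_prop

lemma denom_rw (hq : 1 < q) (θ : ℝ) :
    (q - 1) ^ 2 / (4 * q) + sin θ ^ 2 = ((q - 1) ^ 2 + 4 * q * sin θ ^ 2) / (4 * q) := by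
  have hq4 : (4 * q) ≠ 0 := by positivity
  field_simp

lemma denom2_pos (hq : 1 < q) (θ : ℝ) : 0 < (q - 1) ^ 2 + 4 * q * sin θ ^ 2 := by
  have := pow_pos (show (0:ℝ) < q - 1 by linarith) 2
  nlinarith [sq_nonneg (sin θ)]

lemma J_zero (hq : 1 < q) :
    ∫ θ in (0:ℝ)..π, 1 / ((q - 1) ^ 2 / (4 * q) + sin θ ^ 2)
      = 4 * π * q / (q ^ 2 - 1) := by
  set k : ℝ := (q + 1) / (q - 1) with hkdef
  have hq1 : q - 1 ≠ 0 := by linarith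
  have hq0 : (0:ℝ) < q := by linarith
  have hk : 0 < k := div_pos (by linarith) (by linarith)
  have hwpos : ∀ θ : ℝ, 0 < cos θ ^ 2 + k ^ 2 * sin θ ^ 2 := by
    intro θ
    rcases eq_or_ne (sin θ) 0 with h | h
    · have : cos θ ^ 2 = 1 := by
        have := sin_sq_add_cos_sq θ; rw [h] at this; simpa using this
      simp [h, this]
    · positivity
  have hcong : Set.EqOn (fun θ : ℝ => 1 / ((q - 1) ^ 2 / (4 * q) + sin θ ^ 2))
      (fun θ : ℝ => (4 * q / (q ^ 2 - 1)) * (k / (cos θ ^ 2 + k ^ 2 * sin θ ^ 2)))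
      (Set.uIcc 0 π) := by
    intro θ _
    have h1 : sin θ ^ 2 + cos θ ^ 2 = 1 := sin_sq_add_cos_sq θ
    have hsq : q ^ 2 - 1 ≠ 0 := by nlinarith
    have hq4 : (0:ℝ) < 4 * q := by linarith
    have hM : (0:ℝ) < (q - 1) ^ 2 * cos θ ^ 2 + (q + 1) ^ 2 * sin θ ^ 2 := by
      nlinarith [sq_nonneg (sin θ), pow_pos (show (0:ℝ) < q - 1 by linarith) 2,
        mul_nonneg hq4.le (sq_nonneg (sin θ))]
    have e0 : (q - 1) ^ 2 / (4 * q) + sin θ ^ 2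
        = ((q - 1) ^ 2 * cos θ ^ 2 + (q + 1) ^ 2 * sin θ ^ 2) / (4 * q) := by
      rw [div_add' _ _ _ hq4.ne', div_eq_div_iff hq4.ne' hq4.ne']
      linear_combination (-(4 * q * (q - 1) ^ 2)) * h1
    have e1 : cos θ ^ 2 + k ^ 2 * sin θ ^ 2
        = ((q - 1) ^ 2 * cos θ ^ 2 + (q + 1) ^ 2 * sin θ ^ 2) / (q - 1) ^ 2 := by
      rw [hkdef]
      field_simp
    simp only
    rw [e0, e1, hkdef]
    field_simp
    ring
  rw [intervalIntegral.integral_congr hcong, intervalIntegral.integral_const_mul,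
    integral_inv_quad k hk]
  ring

lemma intcos_succ (T : ℕ) : ∫ θ in (0:ℝ)..π, cos (2 * ((T:ℝ) + 1) * θ) = 0 := by
  have h := integral_cos_two_mul (T + 1) T.succ_pos
  push_cast at h
  exact h

lemma J_intable (hq : 1 < q) (a : ℝ) :
    IntervalIntegrable (fun θ : ℝ => cos (a * θ) / ((q - 1) ^ 2 / (4 * q) + sin θ ^ 2))
      MeasureTheory.volume 0 π :=
  (cont_integrand q hq _ (by continuity)).intervalIntegrable 0 π

lemma J_one (hq : 1 < q) :
    (∫ θ in (0:ℝ)..π, cos (2 * (1:ℝ) * θ) / ((q - 1) ^ 2 / (4 * q) + sin θ ^ 2))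
      = (q ^ 2 + 1) / (2 * q) *
          (∫ θ in (0:ℝ)..π, 1 / ((q - 1) ^ 2 / (4 * q) + sin θ ^ 2)) - 2 * π := by
  have hq0 : (0:ℝ) < q := by linarith
  have hcong : Set.EqOn
      (fun θ : ℝ => cos (2 * (1:ℝ) * θ) / ((q - 1) ^ 2 / (4 * q) + sin θ ^ 2))
      (fun θ : ℝ => (q ^ 2 + 1) / (2 * q) * (1 / ((q - 1) ^ 2 / (4 * q) + sin θ ^ 2)) - 2)
      (Set.uIcc 0 π) := by
    intro θ _
    have h1 : sin θ ^ 2 + cos θ ^ 2 = 1 := sin_sq_add_cos_sq θ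
    have h2 : cos (2 * (1:ℝ) * θ) = 1 - 2 * sin θ ^ 2 := by
      rw [show (2 * (1:ℝ) * θ) = 2 * θ by ring, cos_two_mul]
      linear_combination 2 * h1
    have hM := (denom2_pos q hq θ).ne'
    simp only
    rw [h2, denom_rw q hq θ]
    have hq4 : (4 * q) ≠ 0 := by positivity
    field_simp
    have hM' : (q - 1) ^ 2 + sin θ ^ 2 * q * 4 ≠ 0 := by convert hM using 1; ring
    rw [div_eq_iff hM', sub_mul (_ / _), div_mul_cancel₀ _ hM']
    ring
  rw [intervalIntegral.integral_congr hcong]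
  rw [intervalIntegral.integral_sub
      ((continuous_const.fun_mul (cont_integrand q hq _ continuous_const)).intervalIntegrable 0 π)
      (intervalIntegrable_const),
    intervalIntegral.integral_const_mul, intervalIntegral.integral_const]
  simp [smul_eq_mul]
  ring

lemma J_rec (hq : 1 < q) (T : ℕ) :
    (∫ θ in (0:ℝ)..π, cos (2 * ((T:ℝ) + 2) * θ) / ((q - 1) ^ 2 / (4 * q) + sin θ ^ 2))
      = (q ^ 2 + 1) / q *
          (∫ θ in (0:ℝ)..π, cos (2 * ((T:ℝ) + 1) * θ) / ((q - 1) ^ 2 / (4 * q) + sin θ ^ 2))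
        - ∫ θ in (0:ℝ)..π, cos (2 * (T:ℝ) * θ) / ((q - 1) ^ 2 / (4 * q) + sin θ ^ 2) := by
  have hq0 : (0:ℝ) < q := by linarith
  have hcong : Set.EqOn
      (fun θ : ℝ => cos (2 * ((T:ℝ) + 2) * θ) / ((q - 1) ^ 2 / (4 * q) + sin θ ^ 2))
      (fun θ : ℝ => (q ^ 2 + 1) / q *
          (cos (2 * ((T:ℝ) + 1) * θ) / ((q - 1) ^ 2 / (4 * q) + sin θ ^ 2))
        - cos (2 * (T:ℝ) * θ) / ((q - 1) ^ 2 / (4 * q) + sin θ ^ 2)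
        - 4 * cos (2 * ((T:ℝ) + 1) * θ)) (Set.uIcc 0 π) := by
    intro θ _
    have h1 : sin θ ^ 2 + cos θ ^ 2 = 1 := sin_sq_add_cos_sq θ
    have e1 := cos_add (2 * ((T:ℝ) + 1) * θ) (2 * θ)
    have e2 := cos_sub (2 * ((T:ℝ) + 1) * θ) (2 * θ)
    rw [show 2 * ((T:ℝ) + 1) * θ + 2 * θ = 2 * ((T:ℝ) + 2) * θ by ring] at e1
    rw [show 2 * ((T:ℝ) + 1) * θ - 2 * θ = 2 * (T:ℝ) * θ by ring] at e2
    have hc : cos (2 * ((T:ℝ) + 2) * θ)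
        = 2 * cos (2 * θ) * cos (2 * ((T:ℝ) + 1) * θ) - cos (2 * (T:ℝ) * θ) := by
      linarith [e1, e2]
    have h2 : cos (2 * θ) = 1 - 2 * sin θ ^ 2 := by
      rw [cos_two_mul]; linear_combination 2 * h1
    have hM := (denom2_pos q hq θ).ne'
    simp only
    rw [hc, h2, denom_rw q hq θ]
    have hq4 : (4 * q) ≠ 0 := by positivity
    field_simp
    have hM' : (q - 1) ^ 2 + sin θ ^ 2 * q * 4 ≠ 0 := by convert hM using 1; ring
    rw [div_eq_iff hM', sub_mul (_ / _), div_mul_cancel₀ _ hM']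
    ring
  rw [intervalIntegral.integral_congr hcong]
  rw [intervalIntegral.integral_sub
      (((continuous_const.fun_mul (cont_integrand q hq _ (cont_cos _))).fun_sub
        (cont_integrand q hq _ (cont_cos _))).intervalIntegrable 0 π)
      ((continuous_const.fun_mul (cont_cos (2 * ((T:ℝ) + 1)))).intervalIntegrable 0 π),
    intervalIntegral.integral_sub
      ((continuous_const.fun_mul (cont_integrand q hq _ (cont_cos _))).intervalIntegrable 0 π)
      ((cont_integrand q hq _ (cont_cos _)).intervalIntegrable 0 π),
    intervalIntegral.integral_const_mul, intervalIntegral.integral_const_mul,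
    intcos_succ]
  ring

lemma J_closed (hq : 1 < q) (T : ℕ) :
    (∫ θ in (0:ℝ)..π, cos (2 * (T:ℝ) * θ) / ((q - 1) ^ 2 / (4 * q) + sin θ ^ 2))
      = 4 * π * q / ((q ^ 2 - 1) * q ^ T) := by
  have hq0 : (0:ℝ) < q := by linarith
  have hsq : q ^ 2 - 1 ≠ 0 := by nlinarith
  induction T using Nat.twoStepInduction with
  | zero =>
    simp only [Nat.cast_zero, mul_zero, zero_mul, Real.cos_zero, pow_zero, mul_one]
    exact J_zero q hq
  | one =>
    have h1 := J_one q hq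
    have h0 := J_zero q hq
    simp only [Nat.cast_one] at *
    rw [h1, h0]
    field_simp
    ring
  | more T ih1 ih2 =>
    have hr := J_rec q hq T
    push_cast
    push_cast at ih1 ih2 hr
    rw [hr, ih1, ih2]
    have hqT : q ^ T ≠ 0 := pow_ne_zero _ hq0.ne'
    field_simp
    ring

end Jlemmas

open Real in
theorem cos_integral_residue_eval (p : ℕ) (hp : p.Prime) (T : ℕ) :
    (((p : ℝ) + 1) / (4 * π)) *
        ∫ θ in (0:ℝ)..π,
          cos (2 * (T : ℝ) * θ) / (((p : ℝ) - 1) ^ 2 / (4 * (p : ℝ)) + sin θ ^ 2)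
      = (p : ℝ) / (((p : ℝ) - 1) * (p : ℝ) ^ T) := by
  have hq : 1 < (p : ℝ) := by exact_mod_cast hp.one_lt
  rw [J_closed (p : ℝ) hq T]
  have hq0 : (0:ℝ) < (p : ℝ) := by linarith
  have hsq : ((p:ℝ) ^ 2 - 1) ≠ 0 := by nlinarith
  have hpi : π ≠ 0 := Real.pi_ne_zero
  have hqT : (p:ℝ) ^ T ≠ 0 := pow_ne_zero _ hq0.ne'
  have hp1 : (p:ℝ) - 1 ≠ 0 := by linarith
  field_simp
  ring
end

section
/- For every natural number d there exists a constant C = C(d) > 0 such that for every totally real number field K with [K : ℚ] ≤ d and every real M ≥ 1, the set {α ∈ 𝓞_K : |σ(α)| ≤ M for every embedding σ : K → ℂ} is finite and has cardinality at most C·M^d. -/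
open NumberField

theorem totally_real_integers_in_box_card_le (d : ℕ) :
    ∃ C : ℝ, 0 < C ∧
      ∀ (K : Type) [Field K] [NumberField K],
        (∀ (σ : K →+* ℂ) (x : K), (σ x).im = 0) →
        Module.finrank ℚ K ≤ d →
        ∀ M : ℝ, 1 ≤ M →
          {α : NumberField.RingOfIntegers K |
              ∀ σ : K →+* ℂ, ‖σ (algebraMap (NumberField.RingOfIntegers K) K α)‖ ≤ M}.Finite ∧
          (({α : NumberField.RingOfIntegers K |
              ∀ σ : K →+* ℂ, ‖σ (algebraMap (NumberField.RingOfIntegers K) K α)‖ ≤ M}.ncard : ℝ)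
            ≤ C * M ^ d) := by
  classical
  refine ⟨5 ^ d, by positivity, ?_⟩
  intro K _ _ htr hd M hM
  set S := {α : NumberField.RingOfIntegers K |
      ∀ σ : K →+* ℂ, ‖σ (algebraMap (NumberField.RingOfIntegers K) K α)‖ ≤ M} with hS
  set f : NumberField.RingOfIntegers K → ((K →+* ℂ) → ℤ) :=
    fun α σ => ⌊(σ (algebraMap (NumberField.RingOfIntegers K) K α)).re⌋ with hf
  have habs : ∀ (σ : K →+* ℂ) (x : K), ‖σ x‖ = |(σ x).re| := by
    intro σ x
    have : (σ x : ℂ) = ((σ x).re : ℂ) := by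
      apply Complex.ext <;> simp [htr σ x]
    rw [this, Complex.norm_real]
    simp
  -- injectivity on S
  have hinj : Set.InjOn f S := by
    intro a ha b hb hab
    by_contra hne
    set γ : NumberField.RingOfIntegers K := a - b with hγ
    have hγ0 : γ ≠ 0 := sub_ne_zero.mpr hne
    -- every infinite place of γ is < 1
    have hlt : ∀ w : InfinitePlace K, w (algebraMap _ K γ) < 1 := by
      intro w
      set φ := w.embedding with hφ
      rw [← w.mk_embedding, InfinitePlace.apply]
      have hcoe : (algebraMap (NumberField.RingOfIntegers K) K γ)
          = algebraMap _ K a - algebraMap _ K b := by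
        simp [hγ]
      rw [habs, hcoe, map_sub, Complex.sub_re]
      have h1 := congrFun hab φ
      simp only [hf] at h1
      exact Int.abs_sub_lt_one_of_floor_eq_floor h1
    -- but the norm is at least 1
    have hge : (1 : ℝ) ≤ |Algebra.norm ℚ (algebraMap (NumberField.RingOfIntegers K) K γ)| := by
      rw [← Algebra.coe_norm_int, ← Int.cast_one, ← Int.cast_abs, Rat.cast_intCast, Int.cast_le]
      exact Int.one_le_abs (Algebra.norm_ne_zero_iff.mpr hγ0)
    rw [← InfinitePlace.prod_eq_abs_norm] at hge
    have hlt' : ∏ w : InfinitePlace K, w (algebraMap _ K γ) ^ w.mult < 1 := by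
      rw [← Finset.prod_const_one]
      refine Finset.prod_lt_prod_of_nonempty (fun w _ => ?_) (fun w _ => ?_) Finset.univ_nonempty
      · exact pow_pos (InfinitePlace.pos_iff.mpr (by
          simpa using (RingOfIntegers.coe_eq_zero_iff (K := K)).not.mpr hγ0)) _
      · exact pow_lt_one₀ (apply_nonneg w _) (hlt w) InfinitePlace.mult_ne_zero
    exact absurd hge (not_le.mpr hlt')
  -- f maps S into a finite box
  set T : Finset ((K →+* ℂ) → ℤ) :=
    Fintype.piFinset (fun _ : (K →+* ℂ) => Finset.Icc (-⌈M⌉) ⌈M⌉) with hT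
  have hsub : f '' S ⊆ ↑T := by
    rintro _ ⟨a, ha, rfl⟩
    rw [Finset.mem_coe, hT, Fintype.mem_piFinset]
    intro σ
    rw [Finset.mem_Icc]
    have hb := ha σ
    rw [habs] at hb
    have h1 : -M ≤ (σ (algebraMap _ K a)).re := (abs_le.mp hb).1
    have h2 : (σ (algebraMap _ K a)).re ≤ M := (abs_le.mp hb).2
    constructor
    · rw [Int.le_floor]
      push_cast
      linarith [Int.le_ceil M]
    · exact le_trans (Int.floor_le_floor h2) (Int.floor_le_ceil M)
  have hfin : S.Finite := by
    have : (f '' S).Finite := T.finite_toSet.subset hsub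
    exact Set.Finite.of_finite_image this hinj
  refine ⟨hfin, ?_⟩
  -- counting
  have hn : Fintype.card (K →+* ℂ) = Module.finrank ℚ K := Embeddings.card K ℂ
  have hcard : S.ncard ≤ T.card := by
    rw [← Set.ncard_image_of_injOn hinj]
    exact le_trans (Set.ncard_le_ncard hsub T.finite_toSet) (by simp [Set.ncard_coe_finset])
  have hTcard : (T.card : ℝ) ≤ (5 * M) ^ Module.finrank ℚ K := by
    rw [hT, Fintype.card_piFinset]
    simp only [Int.card_Icc]
    rw [Finset.prod_const, Finset.card_univ, hn]
    have hc : ((⌈M⌉ + 1 - -⌈M⌉).toNat : ℝ) ≤ 5 * M := by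
      have h1 : (⌈M⌉ : ℝ) ≤ M + 1 := le_of_lt (Int.ceil_lt_add_one M)
      have h2 : (0 : ℤ) ≤ ⌈M⌉ + 1 - -⌈M⌉ := by
        have : (0 : ℤ) ≤ ⌈M⌉ := Int.ceil_nonneg (by linarith)
        omega
      have h3 : (((⌈M⌉ + 1 - -⌈M⌉).toNat : ℕ) : ℝ) = ((⌈M⌉ + 1 - -⌈M⌉ : ℤ) : ℝ) := by
        rw [← Int.cast_natCast, Int.toNat_of_nonneg h2]
      rw [h3]
      push_cast
      linarith
    calc ((((⌈M⌉ + 1 - -⌈M⌉).toNat) ^ Module.finrank ℚ K : ℕ) : ℝ)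
        = (((⌈M⌉ + 1 - -⌈M⌉).toNat : ℝ)) ^ Module.finrank ℚ K := by push_cast; ring
      _ ≤ (5 * M) ^ Module.finrank ℚ K := by
          exact pow_le_pow_left₀ (by positivity) hc _
  calc (S.ncard : ℝ) ≤ (T.card : ℝ) := by exact_mod_cast hcard
    _ ≤ (5 * M) ^ Module.finrank ℚ K := hTcard
    _ ≤ (5 * M) ^ d := by
        apply pow_le_pow_right₀ (by linarith) hd
    _ = 5 ^ d * M ^ d := mul_pow 5 M d
end

section
/- Let K be a number field of degree d over ℚ, let B ≥ 1 be a real number, and suppose K = ℚ(α) for an algebraic integer α ∈ 𝓞_K such that for every embedding σ : K → ℂ, σ(α) is real with |σ(α)| ≤ B. Then the absolute value of the discriminant of K satisfies |disc(K)| ≤ (2B)^{d(d−1)}. -/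
open Finset

theorem discr_bound_of_generator_bounded (K : Type) [Field K] [NumberField K] (d : ℕ)
    (hd : Module.finrank ℚ K = d) (B : ℝ) (hB : 1 ≤ B)
    (α : NumberField.RingOfIntegers K)
    (hgen : IntermediateField.adjoin ℚ
        {(algebraMap (NumberField.RingOfIntegers K) K α)} = ⊤)
    (hreal : ∀ σ : K →+* ℂ, (σ (algebraMap (NumberField.RingOfIntegers K) K α)).im = 0)
    (hbound : ∀ σ : K →+* ℂ,
        ‖σ (algebraMap (NumberField.RingOfIntegers K) K α)‖ ≤ B) :
    |(NumberField.discr K : ℝ)| ≤ (2 * B) ^ (d * (d - 1)) := by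
  classical
  set x := algebraMap (NumberField.RingOfIntegers K) K α with hxdef
  have hxQ : IsIntegral ℚ x := IsIntegral.of_finite ℚ x
  have halg : Algebra.adjoin ℚ ({x} : Set K) = ⊤ := by
    have h := IntermediateField.adjoin_simple_toSubalgebra_of_isAlgebraic hxQ.isAlgebraic
    rw [hgen] at h
    rw [← h, IntermediateField.top_toSubalgebra]
  let pb : PowerBasis ℚ K := (Algebra.adjoin.powerBasis hxQ).map
    ((Subalgebra.equivOfEq _ _ halg).trans Subalgebra.topEquiv)
  have hpbgen : pb.gen = x := by
    simp [pb, Algebra.adjoin.powerBasis]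
  have hdim : pb.dim = d := by rw [← hd, ← pb.finrank]
  -- Part 1 : |disc K| ≤ |disc of power basis|
  set b := NumberField.integralBasis K with hbdef
  let e0 := b.indexEquiv pb.basis
  set c := b.reindex e0 with hcdef
  have hM : ∀ i j, IsIntegral ℤ (c.toMatrix pb.basis i j) := by
    intro i j
    rw [Module.Basis.toMatrix_apply]
    have hb : pb.basis j = algebraMap (NumberField.RingOfIntegers K) K (α ^ (j : ℕ)) := by
      rw [pb.coe_basis, hpbgen, hxdef, map_pow]
    rw [hb, hcdef, Module.Basis.repr_reindex_apply, hbdef,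
      NumberField.integralBasis_repr_apply]
    exact isIntegral_algebraMap
  have key : Algebra.discr ℚ (pb.basis : Fin pb.dim → K)
      = (c.toMatrix pb.basis).det ^ 2 * Algebra.discr ℚ (c : Fin pb.dim → K) := by
    conv_lhs => rw [← c.toMatrix_map_vecMul pb.basis]
    rw [Algebra.discr_of_matrix_vecMul]
  have hdiscc : Algebra.discr ℚ (c : Fin pb.dim → K) = (NumberField.discr K : ℚ) := by
    rw [hcdef, Module.Basis.coe_reindex, Algebra.discr_reindex, NumberField.coe_discr]
  have hdetint : IsIntegral ℤ (c.toMatrix (pb.basis : Fin pb.dim → K)).det :=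
    IsIntegral.det fun i j => hM i j
  obtain ⟨r, hr⟩ := IsIntegrallyClosed.isIntegral_iff.1 hdetint
  have hdetne : (c.toMatrix (pb.basis : Fin pb.dim → K)).det ≠ 0 := by
    have h1 := Module.Basis.toMatrix_mul_toMatrix_flip c pb.basis
    intro h0
    have := congrArg Matrix.det h1
    rw [Matrix.det_mul, h0, zero_mul, Matrix.det_one] at this
    exact zero_ne_one this
  have hr1 : (1 : ℚ) ≤ (c.toMatrix (pb.basis : Fin pb.dim → K)).det ^ 2 := by
    have hrne : r ≠ 0 := by
      rintro rfl; simp only [map_zero] at hr; exact hdetne hr.symm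
    have h2 : (1 : ℤ) ≤ r ^ 2 := by nlinarith [sq_abs r, Int.one_le_abs hrne]
    rw [← hr, eq_intCast]
    exact_mod_cast h2
  have part1 : |(NumberField.discr K : ℚ)|
      ≤ |Algebra.discr ℚ (pb.basis : Fin pb.dim → K)| := by
    rw [key, hdiscc, abs_mul, abs_of_nonneg (by positivity :
      (0:ℚ) ≤ (c.toMatrix (pb.basis : Fin pb.dim → K)).det ^ 2)]
    nlinarith [abs_nonneg ((NumberField.discr K : ℚ))]
  -- Part 2 : bound the power-basis discriminant via embeddings
  have hcard : Fintype.card (K →ₐ[ℚ] ℂ) = pb.dim := by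
    rw [AlgHom.card, pb.finrank]
  let e : Fin pb.dim ≃ (K →ₐ[ℚ] ℂ) := (Fintype.equivFinOfCardEq hcard).symm
  have hprod := Algebra.discr_powerBasis_eq_prod ℚ ℂ pb e
  have h2B : (0:ℝ) ≤ 2 * B := by linarith
  have part2 : ‖algebraMap ℚ ℂ (Algebra.discr ℚ (pb.basis : Fin pb.dim → K))‖
      ≤ (2 * B) ^ (pb.dim * (pb.dim - 1)) := by
    calc ‖algebraMap ℚ ℂ (Algebra.discr ℚ (pb.basis : Fin pb.dim → K))‖
        = ∏ i : Fin pb.dim, ∏ j ∈ Ioi i,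
            ‖e j pb.gen - e i pb.gen‖ ^ 2 := by
          rw [hprod]
          simp only [map_prod, map_pow, norm_prod, norm_pow]
      _ ≤ ∏ i : Fin pb.dim, ∏ j ∈ Ioi i, (2 * B) ^ 2 := by
          refine Finset.prod_le_prod (fun i _ => Finset.prod_nonneg fun j _ => by positivity)
            fun i _ => Finset.prod_le_prod (fun j _ => by positivity) fun j _ => ?_
          refine pow_le_pow_left₀ (norm_nonneg _) ?_ 2
          calc ‖e j pb.gen - e i pb.gen‖
              ≤ ‖e j pb.gen‖ + ‖e i pb.gen‖ :=
                norm_sub_le _ _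
            _ ≤ B + B := by
                rw [hpbgen]
                exact add_le_add (hbound (e j).toRingHom) (hbound (e i).toRingHom)
            _ = 2 * B := by ring
      _ = (2 * B) ^ (2 * ∑ i : Fin pb.dim, (Ioi i).card) := by
          simp_rw [Finset.prod_const, ← pow_mul]
          rw [Finset.prod_pow_eq_pow_sum]
          congr 1
          rw [Finset.mul_sum]
      _ = (2 * B) ^ (pb.dim * (pb.dim - 1)) := by
          congr 1
          simp_rw [Fin.card_Ioi]
          rw [Fin.sum_univ_eq_sum_range (fun i => pb.dim - 1 - i) pb.dim,
            Finset.sum_range_reflect (fun j => j) pb.dim]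
          have := Finset.sum_range_id_mul_two pb.dim
          omega
  -- Combine
  calc |(NumberField.discr K : ℝ)|
      = ((|(NumberField.discr K : ℚ)| : ℚ) : ℝ) := by push_cast; ring
    _ ≤ ((|Algebra.discr ℚ (pb.basis : Fin pb.dim → K)| : ℚ) : ℝ) := by exact_mod_cast part1
    _ = ‖algebraMap ℚ ℂ (Algebra.discr ℚ (pb.basis : Fin pb.dim → K))‖ := by
        rw [eq_ratCast]
        rw [show ((Algebra.discr ℚ (pb.basis : Fin pb.dim → K) : ℚ) : ℂ)
          = (((Algebra.discr ℚ (pb.basis : Fin pb.dim → K) : ℚ) : ℝ) : ℂ) by push_cast; ring]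
        rw [Complex.norm_real, Real.norm_eq_abs]
        push_cast
        ring
    _ ≤ (2 * B) ^ (pb.dim * (pb.dim - 1)) := part2
    _ = (2 * B) ^ (d * (d - 1)) := by rw [hdim]
end

section
/- There exists a constant C > 0 such that for every real Y ≥ 3, |∑_{p ≤ Y, p prime} log log p − π(Y)·log log Y| ≤ C·Y/(log Y)², where π(Y) denotes the number of primes up to Y. -/
set_option maxHeartbeats 1000000
open Finset

-- θ(n) ≤ n log 4
lemma theta_le (n : ℕ) : ∑ p ∈ (Finset.Iic n).filter Nat.Prime, Real.log p ≤ n * Real.log 4 := by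
  have h1 : (Finset.Iic n) = Finset.range (n+1) := by
    ext x; simp [Nat.lt_succ_iff]
  have h2 : ∑ p ∈ (Finset.range (n+1)).filter Nat.Prime, Real.log p
      = Real.log (primorial n) := by
    rw [primorial]
    push_cast
    rw [Real.log_prod]
    intro p hp
    simp only [mem_filter] at hp
    exact_mod_cast hp.2.pos.ne'
  rw [h1, h2]
  calc Real.log (primorial n) ≤ Real.log ((4:ℝ)^n) := by
        apply Real.log_le_log (by exact_mod_cast (primorial_pos n))
        exact_mod_cast primorial_le_4_pow n
    _ = n * Real.log 4 := by rw [Real.log_pow]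

lemma pi_le (n : ℕ) (hn : 2 ≤ n) :
    ((((Finset.Iic n).filter Nat.Prime).card : ℝ)) ≤
      Real.sqrt n + 1 + 2 * Real.log 4 * n / Real.log n := by
  set P := (Finset.Iic n).filter Nat.Prime with hP
  have hlogn : 0 < Real.log n := Real.log_pos (by exact_mod_cast hn)
  have hsplit : (P.filter (fun p => p*p ≤ n)).card + (P.filter (fun p => ¬ p*p ≤ n)).card
      = P.card := Finset.card_filter_add_card_filter_not _
  -- small
  have hsmall : ((P.filter (fun p => p*p ≤ n)).card : ℝ) ≤ Real.sqrt n + 1 := by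
    have hsub : P.filter (fun p => p*p ≤ n) ⊆ Finset.Iic (Nat.sqrt n) := by
      intro p hp
      simp only [Finset.mem_filter, Finset.mem_Iic] at hp ⊢
      exact Nat.le_sqrt.mpr hp.2
    have := Finset.card_le_card hsub
    have h2 : ((Nat.sqrt n : ℕ) : ℝ) ≤ Real.sqrt n := Real.nat_sqrt_le_real_sqrt
    calc ((P.filter (fun p => p*p ≤ n)).card : ℝ) ≤ ((Nat.sqrt n + 1 : ℕ) : ℝ) := by
          exact_mod_cast le_trans this (le_of_eq (Nat.card_Iic _))
      _ ≤ Real.sqrt n + 1 := by push_cast; linarith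
  -- big
  have hbig : ((P.filter (fun p => ¬ p*p ≤ n)).card : ℝ) ≤ 2 * Real.log 4 * n / Real.log n := by
    have hterm : ∀ p ∈ P.filter (fun p => ¬ p*p ≤ n), Real.log n / 2 ≤ Real.log p := by
      intro p hp
      simp only [Finset.mem_filter, not_le, hP] at hp
      have hp2 : (n:ℝ) < (p:ℝ) * p := by exact_mod_cast hp.2
      have hppos : (0:ℝ) < p := by exact_mod_cast hp.1.2.pos
      have : Real.log n ≤ Real.log ((p:ℝ)*p) :=
        Real.log_le_log (by positivity) (le_of_lt hp2)
      rw [Real.log_mul hppos.ne' hppos.ne'] at this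
      linarith
    have hsum : ((P.filter (fun p => ¬ p*p ≤ n)).card : ℝ) * (Real.log n / 2)
        ≤ ∑ p ∈ P.filter (fun p => ¬ p*p ≤ n), Real.log p := by
      have := Finset.card_nsmul_le_sum (P.filter (fun p => ¬ p*p ≤ n))
        (fun p => Real.log p) (Real.log n / 2) hterm
      simpa [nsmul_eq_mul] using this
    have hsum2 : ∑ p ∈ P.filter (fun p => ¬ p*p ≤ n), Real.log p
        ≤ ∑ p ∈ P, Real.log p := by
      apply Finset.sum_le_sum_of_subset_of_nonneg (Finset.filter_subset _ _)
      intro p hp _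
      simp only [Finset.mem_filter, hP] at hp
      exact Real.log_nonneg (by exact_mod_cast hp.2.one_lt.le)
    have htheta := theta_le n
    rw [le_div_iff₀ hlogn]
    nlinarith [hlogn]
  have : (P.card : ℝ) = ((P.filter (fun p => p*p ≤ n)).card : ℝ)
      + ((P.filter (fun p => ¬ p*p ≤ n)).card : ℝ) := by exact_mod_cast hsplit.symm
  linarith

lemma card_primes_le (n : ℕ) : (((Finset.Iic n).filter Nat.Prime).card : ℝ) ≤ n := by
  have hsub : (Finset.Iic n).filter Nat.Prime ⊆ Finset.Icc 1 n := by
    intro p hp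
    simp only [Finset.mem_filter, Finset.mem_Iic, Finset.mem_Icc] at hp ⊢
    exact ⟨hp.2.one_lt.le.trans' (by norm_num), hp.1⟩
  have := Finset.card_le_card hsub
  rw [Nat.card_Icc] at this
  exact_mod_cast this.trans (by omega)

lemma Tsum_le (M : ℕ) (hM : 4 ≤ M) :
    ∑ n ∈ Finset.range M, (((Finset.Iic n).filter Nat.Prime).card : ℝ) / n
      ≤ 18 * M / Real.log M := by
  have hM1 : (1:ℝ) < M := by exact_mod_cast lt_of_lt_of_le (by norm_num) hM
  have hlogM : 0 < Real.log M := Real.log_pos hM1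
  have hMpos : (0:ℝ) < M := by linarith
  have hlog4 : (0:ℝ) ≤ Real.log 4 := Real.log_nonneg (by norm_num)
  set f : ℕ → ℝ := fun n => (((Finset.Iic n).filter Nat.Prime).card : ℝ) / n with hf
  have hsplit := Finset.sum_filter_add_sum_filter_not (Finset.range M) (fun n => n*n ≤ M) f
  -- region A
  have hA : ∑ n ∈ (Finset.range M).filter (fun n => n*n ≤ M), f n ≤ Real.sqrt M + 1 := by
    have h1 : ∀ n ∈ (Finset.range M).filter (fun n => n*n ≤ M), f n ≤ 1 := by
      intro n _
      rcases Nat.eq_zero_or_pos n with h | h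
      · simp [hf, h]
      · have hn : (0:ℝ) < n := by exact_mod_cast h
        rw [hf]
        rw [div_le_one hn]
        exact card_primes_le n
    have h2 := Finset.sum_le_card_nsmul _ _ 1 h1
    have h3 : ((Finset.range M).filter (fun n => n*n ≤ M)).card ≤ Nat.sqrt M + 1 := by
      have hsub : (Finset.range M).filter (fun n => n*n ≤ M) ⊆ Finset.Iic (Nat.sqrt M) := by
        intro n hn
        simp only [Finset.mem_filter, Finset.mem_Iic] at hn ⊢
        exact Nat.le_sqrt.mpr hn.2
      simpa [Nat.card_Iic] using Finset.card_le_card hsub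
    have h4 : ((Nat.sqrt M : ℕ) : ℝ) ≤ Real.sqrt M := Real.nat_sqrt_le_real_sqrt
    calc ∑ n ∈ (Finset.range M).filter (fun n => n*n ≤ M), f n
        ≤ (((Finset.range M).filter (fun n => n*n ≤ M)).card : ℝ) := by
          simpa [nsmul_eq_mul] using h2
      _ ≤ ((Nat.sqrt M + 1 : ℕ) : ℝ) := by exact_mod_cast h3
      _ ≤ Real.sqrt M + 1 := by push_cast; linarith
  -- region B
  have hssM : 0 < Real.sqrt (Real.sqrt M) := Real.sqrt_pos.mpr (Real.sqrt_pos.mpr hMpos)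
  have hB : ∑ n ∈ (Finset.range M).filter (fun n => ¬ n*n ≤ M), f n
      ≤ (M : ℝ) * (2 / Real.sqrt (Real.sqrt M) + 4 * Real.log 4 / Real.log M) := by
    have h1 : ∀ n ∈ (Finset.range M).filter (fun n => ¬ n*n ≤ M),
        f n ≤ 2 / Real.sqrt (Real.sqrt M) + 4 * Real.log 4 / Real.log M := by
      intro n hn
      simp only [Finset.mem_filter, Finset.mem_range, not_le] at hn
      have hn3 : 3 ≤ n := by nlinarith [hn.1, hn.2, hM]
      have hnR : (3:ℝ) ≤ n := by exact_mod_cast hn3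
      have hnpos : (0:ℝ) < n := by linarith
      have hlogn : 0 < Real.log n := Real.log_pos (by linarith)
      have hc := pi_le n (by omega)
      have hMn : (M:ℝ) < (n:ℝ)*(n:ℝ) := by exact_mod_cast hn.2
      have hsqMn : Real.sqrt M ≤ (n:ℝ) := by
        have h := Real.sqrt_le_sqrt hMn.le
        rwa [Real.sqrt_mul_self hnpos.le] at h
      have hssn : Real.sqrt (Real.sqrt M) ≤ Real.sqrt n := Real.sqrt_le_sqrt hsqMn
      have hsq1 : (1:ℝ) ≤ Real.sqrt n := by
        rw [show (1:ℝ) = Real.sqrt 1 from (Real.sqrt_one).symm]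
        exact Real.sqrt_le_sqrt (by linarith)
      have hmulself : Real.sqrt n * Real.sqrt n = (n:ℝ) := Real.mul_self_sqrt hnpos.le
      have key2 : Real.sqrt n * Real.sqrt (Real.sqrt M) ≤ (n:ℝ) := by
        nlinarith [Real.sqrt_nonneg (n:ℝ)]
      have key3 : Real.log M ≤ 2 * Real.log n := by
        have h := Real.log_le_log hMpos hMn.le
        rwa [Real.log_mul hnpos.ne' hnpos.ne', ← two_mul] at h
      -- goal
      rw [hf]
      rw [div_le_iff₀ hnpos]
      have e1 : Real.sqrt n + 1 ≤ 2 / Real.sqrt (Real.sqrt M) * n := by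
        rw [div_mul_eq_mul_div, le_div_iff₀ hssM]
        nlinarith [Real.sqrt_nonneg (Real.sqrt (M:ℝ))]
      have e2 : 2 * Real.log 4 * n / Real.log n ≤ 4 * Real.log 4 / Real.log M * n := by
        rw [div_mul_eq_mul_div, div_le_div_iff₀ hlogn hlogM]
        have hh := mul_le_mul_of_nonneg_left key3 (show (0:ℝ) ≤ 2*Real.log 4*(n:ℝ) by positivity)
        nlinarith [hh]
      calc (((Finset.Iic n).filter Nat.Prime).card : ℝ)
          ≤ Real.sqrt n + 1 + 2 * Real.log 4 * n / Real.log n := hc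
        _ ≤ 2 / Real.sqrt (Real.sqrt M) * n + 4 * Real.log 4 / Real.log M * n := by linarith
        _ = (2 / Real.sqrt (Real.sqrt M) + 4 * Real.log 4 / Real.log M) * n := by ring
    have h2 := Finset.sum_le_card_nsmul _ _ _ h1
    have h3 : (((Finset.range M).filter (fun n => ¬ n*n ≤ M)).card : ℝ) ≤ M := by
      have := Finset.card_le_card (Finset.filter_subset (fun n => ¬ n*n ≤ M) (Finset.range M))
      rw [Finset.card_range] at this
      exact_mod_cast this
    have hpos : (0:ℝ) ≤ 2 / Real.sqrt (Real.sqrt M) + 4 * Real.log 4 / Real.log M := by positivity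
    calc ∑ n ∈ (Finset.range M).filter (fun n => ¬ n*n ≤ M), f n
        ≤ (((Finset.range M).filter (fun n => ¬ n*n ≤ M)).card : ℝ)
            * (2 / Real.sqrt (Real.sqrt M) + 4 * Real.log 4 / Real.log M) := by
          simpa [nsmul_eq_mul, mul_add] using h2
      _ ≤ (M : ℝ) * (2 / Real.sqrt (Real.sqrt M) + 4 * Real.log 4 / Real.log M) := by
          exact mul_le_mul_of_nonneg_right h3 hpos
  -- combine and arithmetic
  have hlog_half : Real.log M ≤ 2 * Real.sqrt M := by
    have h := Real.log_le_rpow_div hMpos.le (by norm_num : (0:ℝ) < 1/2)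
    rw [Real.sqrt_eq_rpow]
    linarith [h]
  have hlog_quarter : Real.log M ≤ 4 * Real.sqrt (Real.sqrt M) := by
    have h := Real.log_le_rpow_div hMpos.le (by norm_num : (0:ℝ) < 1/4)
    have he : Real.sqrt (Real.sqrt M) = (M:ℝ) ^ ((1:ℝ)/4) := by
      rw [Real.sqrt_eq_rpow, Real.sqrt_eq_rpow, ← Real.rpow_mul hMpos.le]
      norm_num
    rw [he]
    linarith [h]
  have hlog4_le : 4 * Real.log 4 ≤ 6 := by
    have h2 : Real.log 4 = 2 * Real.log 2 := by
      rw [show (4:ℝ) = 2^2 by norm_num, Real.log_pow]; push_cast; ring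
    have := Real.log_two_lt_d9
    rw [h2]; linarith
  have hsqM : (1:ℝ) ≤ Real.sqrt M := by
    rw [show (1:ℝ) = Real.sqrt 1 from (Real.sqrt_one).symm]
    exact Real.sqrt_le_sqrt (by linarith)
  have t1 : Real.sqrt M + 1 ≤ 4 * M / Real.log M := by
    rw [le_div_iff₀ hlogM]
    have hp := mul_le_mul_of_nonneg_left hlog_half (show (0:ℝ) ≤ Real.sqrt M + 1 by positivity)
    nlinarith [Real.sq_sqrt hMpos.le, Real.sqrt_nonneg (M:ℝ), hsqM, hp]
  have t2 : (M:ℝ) * (2 / Real.sqrt (Real.sqrt M)) ≤ 8 * M / Real.log M := by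
    rw [mul_div_assoc', le_div_iff₀ hlogM, div_mul_eq_mul_div, div_le_iff₀ hssM]
    have hp := mul_le_mul_of_nonneg_left hlog_quarter (show (0:ℝ) ≤ 2*(M:ℝ) by positivity)
    linarith [hp]
  have t3 : (M:ℝ) * (4 * Real.log 4 / Real.log M) ≤ 6 * M / Real.log M := by
    rw [mul_div_assoc', div_le_div_iff₀ hlogM hlogM]
    have hp := mul_le_mul_of_nonneg_right hlog4_le (mul_nonneg hMpos.le hlogM.le)
    nlinarith [hp]
  have : ∑ n ∈ Finset.range M, f n ≤ Real.sqrt M + 1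
      + (M : ℝ) * (2 / Real.sqrt (Real.sqrt M) + 4 * Real.log 4 / Real.log M) := by
    rw [← hsplit]; linarith
  rw [hf] at this
  calc ∑ n ∈ Finset.range M, (((Finset.Iic n).filter Nat.Prime).card : ℝ) / n
      ≤ Real.sqrt M + 1 + (M : ℝ) * (2 / Real.sqrt (Real.sqrt M) + 4 * Real.log 4 / Real.log M) := this
    _ ≤ 4 * M / Real.log M + 8 * M / Real.log M + 6 * M / Real.log M := by
        have := mul_add (M:ℝ) (2 / Real.sqrt (Real.sqrt M)) (4 * Real.log 4 / Real.log M)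
        linarith
    _ = 18 * M / Real.log M := by ring

lemma log_tel (m : ℕ) :
    ∑ n ∈ Finset.range m, (Real.log ((n:ℝ)+1) - Real.log n) = Real.log m := by
  calc ∑ n ∈ Finset.range m, (Real.log ((n:ℝ)+1) - Real.log n)
      = ∑ n ∈ Finset.range m, (Real.log (((n+1 : ℕ)):ℝ) - Real.log n) := by
        apply Finset.sum_congr rfl; intro n _; push_cast; ring
    _ = Real.log m - Real.log ((0:ℕ):ℝ) := Finset.sum_range_sub (fun n : ℕ => Real.log n) m
    _ = Real.log m := by simp

lemma swap_le (N : ℕ) :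
    ∑ p ∈ (Finset.Iic N).filter Nat.Prime, (Real.log ((N:ℝ)+1) - Real.log p)
      ≤ ∑ n ∈ Finset.range (N+1), (((Finset.Iic n).filter Nat.Prime).card : ℝ) / n := by
  set P := (Finset.Iic N).filter Nat.Prime with hP
  have h1 : ∑ p ∈ P, (Real.log ((N:ℝ)+1) - Real.log p)
      ≤ ∑ p ∈ P, ∑ n ∈ Finset.Ico p (N+1), 1/(n:ℝ) := by
    apply Finset.sum_le_sum
    intro p hp
    simp only [hP, Finset.mem_filter, Finset.mem_Iic] at hp
    have hpM : p ≤ N + 1 := by omega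
    have htel : Real.log ((N:ℝ)+1) - Real.log p
        = ∑ n ∈ Finset.Ico p (N+1), (Real.log ((n:ℝ)+1) - Real.log n) := by
      rw [Finset.sum_Ico_eq_sub _ hpM, log_tel, log_tel]
      push_cast; ring
    rw [htel]
    apply Finset.sum_le_sum
    intro n _
    rcases Nat.eq_zero_or_pos n with h | h
    · simp [h]
    · have hn : (0:ℝ) < n := by exact_mod_cast h
      have hpos : (0:ℝ) < ((n:ℝ)+1)/n := by positivity
      have := Real.log_le_sub_one_of_pos hpos
      rw [Real.log_div (by linarith) hn.ne'] at this
      have h2 : ((n:ℝ)+1)/n - 1 = 1/n := by field_simp; ring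
      linarith
  have h2 : ∑ p ∈ P, ∑ n ∈ Finset.Ico p (N+1), 1/(n:ℝ)
      ≤ ∑ n ∈ Finset.range (N+1), (((Finset.Iic n).filter Nat.Prime).card : ℝ) / n := by
    have e : ∀ p ∈ P, ∑ n ∈ Finset.Ico p (N+1), 1/(n:ℝ)
        = ∑ n ∈ Finset.range (N+1), if p ≤ n then 1/(n:ℝ) else 0 := by
      intro p _
      rw [← Finset.sum_filter]
      congr 1
      ext n
      simp only [Finset.mem_Ico, Finset.mem_filter, Finset.mem_range]
      omega
    rw [Finset.sum_congr rfl e, Finset.sum_comm]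
    apply Finset.sum_le_sum
    intro n _
    rw [← Finset.sum_filter, Finset.sum_const, nsmul_eq_mul]
    have hsub : P.filter (fun p => p ≤ n) ⊆ (Finset.Iic n).filter Nat.Prime := by
      intro q hq
      simp only [hP, Finset.mem_filter, Finset.mem_Iic] at hq ⊢
      exact ⟨hq.2, hq.1.2⟩
    have hcard : ((P.filter (fun p => p ≤ n)).card : ℝ)
        ≤ (((Finset.Iic n).filter Nat.Prime).card : ℝ) := by
      exact_mod_cast Finset.card_le_card hsub
    have hn0 : (0:ℝ) ≤ 1/(n:ℝ) := by positivity
    calc ((P.filter (fun p => p ≤ n)).card : ℝ) * (1/(n:ℝ))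
        ≤ (((Finset.Iic n).filter Nat.Prime).card : ℝ) * (1/(n:ℝ)) :=
          mul_le_mul_of_nonneg_right hcard hn0
      _ = (((Finset.Iic n).filter Nat.Prime).card : ℝ) / n := by ring
  exact h1.trans h2

theorem sum_loglog_primes_partial_summation :
    ∃ C : ℝ, 0 < C ∧ ∀ Y : ℝ, 3 ≤ Y →
      |(∑ p ∈ (Finset.Iic ⌊Y⌋₊).filter Nat.Prime, Real.log (Real.log p)) -
          (((Finset.Iic ⌊Y⌋₊).filter Nat.Prime).card : ℝ) * Real.log (Real.log Y)|
        ≤ C * Y / Real.log Y ^ 2 := by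
  refine ⟨1000, by norm_num, ?_⟩
  intro Y hY
  set N := ⌊Y⌋₊ with hN
  set P := (Finset.Iic N).filter Nat.Prime with hP
  have hY0 : (0:ℝ) < Y := by linarith
  have hNY : (N:ℝ) ≤ Y := Nat.floor_le hY0.le
  have hN3 : 3 ≤ N := Nat.le_floor (by exact_mod_cast hY)
  have hYM : Y < (N:ℝ) + 1 := Nat.lt_floor_add_one Y
  have hlogY1 : 1 ≤ Real.log Y := by
    rw [Real.le_log_iff_exp_le hY0]
    calc Real.exp 1 ≤ 2.7182818286 := Real.exp_one_lt_d9.le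
      _ ≤ 3 := by norm_num
      _ ≤ Y := hY
  have hlogY : 0 < Real.log Y := by linarith
  -- basic facts about members of P
  have hmem : ∀ p ∈ P, Nat.Prime p ∧ (2:ℝ) ≤ p ∧ (p:ℝ) ≤ Y := by
    intro p hp
    simp only [hP, Finset.mem_filter, Finset.mem_Iic] at hp
    exact ⟨hp.2, by exact_mod_cast hp.2.two_le, le_trans (by exact_mod_cast hp.1) hNY⟩
  have hlogp : ∀ p ∈ P, 0 < Real.log p ∧ Real.log p ≤ Real.log Y := by
    intro p hp
    obtain ⟨hpr, h2, hpY⟩ := hmem p hp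
    exact ⟨Real.log_pos (by linarith), Real.log_le_log (by linarith) hpY⟩
  have hterm_nonneg : ∀ p ∈ P, 0 ≤ Real.log (Real.log Y) - Real.log (Real.log p) := by
    intro p hp
    obtain ⟨hp0, hpY⟩ := hlogp p hp
    have := Real.log_le_log hp0 hpY
    linarith
  -- rewrite the absolute value
  have hsum : (P.card : ℝ) * Real.log (Real.log Y) - ∑ p ∈ P, Real.log (Real.log p)
      = ∑ p ∈ P, (Real.log (Real.log Y) - Real.log (Real.log p)) := by
    rw [Finset.sum_sub_distrib, Finset.sum_const, nsmul_eq_mul]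
  rw [abs_sub_comm, hsum, abs_of_nonneg (Finset.sum_nonneg hterm_nonneg)]
  -- split small/big
  have hsplit := Finset.sum_filter_add_sum_filter_not P (fun p => p*p ≤ N)
    (fun p => Real.log (Real.log Y) - Real.log (Real.log p))
  -- SMALL part
  have hsqY1 : (1:ℝ) ≤ Real.sqrt Y := by
    rw [show (1:ℝ) = Real.sqrt 1 from (Real.sqrt_one).symm]
    exact Real.sqrt_le_sqrt (by linarith)
  have hSsmall : ∑ p ∈ P.filter (fun p => p*p ≤ N),
      (Real.log (Real.log Y) - Real.log (Real.log p)) ≤ 2 * Real.sqrt Y * (2 * Real.log Y) := by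
    have h1 : ∀ p ∈ P.filter (fun p => p*p ≤ N),
        Real.log (Real.log Y) - Real.log (Real.log p) ≤ 2 * Real.log Y := by
      intro p hp
      have hpP := Finset.filter_subset (fun p => p*p ≤ N) P hp
      obtain ⟨hpr, h2, hpY⟩ := hmem p hpP
      have hl2 : Real.log 2 ≤ Real.log p := Real.log_le_log (by norm_num) h2
      have hl2pos : (0:ℝ) < Real.log 2 := Real.log_pos (by norm_num)
      have hll2 : Real.log (Real.log 2) ≤ Real.log (Real.log p) := Real.log_le_log hl2pos hl2
      have hhalf : (1:ℝ)/2 ≤ Real.log 2 := by linarith [Real.log_two_gt_d9]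
      have hll2' : Real.log ((1:ℝ)/2) ≤ Real.log (Real.log 2) := Real.log_le_log (by norm_num) hhalf
      have hhalfval : Real.log ((1:ℝ)/2) = - Real.log 2 := by
        rw [one_div, Real.log_inv]
      have hlog2lt : Real.log 2 < 1 := by linarith [Real.log_two_lt_d9]
      have hup : Real.log (Real.log Y) ≤ Real.log Y := Real.log_le_self hlogY.le
      have : -1 ≤ Real.log (Real.log p) := by
        rw [hhalfval] at hll2'
        linarith
      linarith
    have h2 := Finset.sum_le_card_nsmul _ _ _ h1
    have hcard : ((P.filter (fun p => p*p ≤ N)).card : ℝ) ≤ 2 * Real.sqrt Y := by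
      have hsub : P.filter (fun p => p*p ≤ N) ⊆ Finset.Iic (Nat.sqrt N) := by
        intro p hp
        simp only [hP, Finset.mem_filter, Finset.mem_Iic] at hp ⊢
        exact Nat.le_sqrt.mpr hp.2
      have h3 : (P.filter (fun p => p*p ≤ N)).card ≤ Nat.sqrt N + 1 := by
        simpa [Nat.card_Iic] using Finset.card_le_card hsub
      have h4 : ((Nat.sqrt N : ℕ) : ℝ) ≤ Real.sqrt N := Real.nat_sqrt_le_real_sqrt
      have h5 : Real.sqrt N ≤ Real.sqrt Y := Real.sqrt_le_sqrt hNY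
      calc ((P.filter (fun p => p*p ≤ N)).card : ℝ) ≤ ((Nat.sqrt N + 1 : ℕ) : ℝ) := by
            exact_mod_cast h3
        _ ≤ Real.sqrt Y + 1 := by push_cast; linarith
        _ ≤ 2 * Real.sqrt Y := by linarith
    calc ∑ p ∈ P.filter (fun p => p*p ≤ N),
          (Real.log (Real.log Y) - Real.log (Real.log p))
        ≤ ((P.filter (fun p => p*p ≤ N)).card : ℝ) * (2 * Real.log Y) := by
          simpa [nsmul_eq_mul] using h2
      _ ≤ 2 * Real.sqrt Y * (2 * Real.log Y) := by
          apply mul_le_mul_of_nonneg_right hcard (by positivity)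
  have hsmall_final : 2 * Real.sqrt Y * (2 * Real.log Y) ≤ 864 * Y / Real.log Y ^ 2 := by
    rw [le_div_iff₀ (by positivity : (0:ℝ) < Real.log Y ^ 2)]
    have hcube : Real.log Y ^ 3 ≤ 216 * Real.sqrt Y := by
      have h := Real.log_le_rpow_div hY0.le (by norm_num : (0:ℝ) < 1/6)
      have h6 : Real.log Y ≤ 6 * Y ^ ((1:ℝ)/6) := by
        have e : Y ^ ((1:ℝ)/6) / (1/6) = 6 * Y ^ ((1:ℝ)/6) := by ring
        linarith [h, e.symm.le, e.le]
      have hrp : (0:ℝ) ≤ Y ^ ((1:ℝ)/6) := Real.rpow_nonneg hY0.le _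
      have hc : Real.log Y ^ 3 ≤ (6 * Y ^ ((1:ℝ)/6)) ^ 3 := by
        apply pow_le_pow_left₀ (by linarith) h6
      have hY16 : (Y ^ ((1:ℝ)/6)) ^ (3:ℕ) = Real.sqrt Y := by
        rw [← Real.rpow_natCast (Y ^ ((1:ℝ)/6)) 3, ← Real.rpow_mul hY0.le, Real.sqrt_eq_rpow]
        norm_num
      calc Real.log Y ^ 3 ≤ (6 * Y ^ ((1:ℝ)/6)) ^ 3 := hc
        _ = 216 * (Y ^ ((1:ℝ)/6)) ^ (3:ℕ) := by ring
        _ = 216 * Real.sqrt Y := by rw [hY16]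
    have hss : Real.sqrt Y * Real.sqrt Y = Y := Real.mul_self_sqrt hY0.le
    have hp := mul_le_mul_of_nonneg_left hcube (show (0:ℝ) ≤ 4 * Real.sqrt Y by positivity)
    nlinarith [hp, hss]
  -- BIG part
  have hSbig : ∑ p ∈ P.filter (fun p => ¬ p*p ≤ N),
      (Real.log (Real.log Y) - Real.log (Real.log p)) ≤ 72 * Y / Real.log Y ^ 2 := by
    have hlogM : Real.log Y ≤ Real.log ((N:ℝ)+1) := Real.log_le_log hY0 hYM.le
    have h1 : ∀ p ∈ P.filter (fun p => ¬ p*p ≤ N),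
        Real.log (Real.log Y) - Real.log (Real.log p)
          ≤ 2 * (Real.log ((N:ℝ)+1) - Real.log p) / Real.log Y := by
      intro p hp
      simp only [Finset.mem_filter, not_le] at hp
      obtain ⟨hpP, hpp⟩ := hp
      obtain ⟨hpr, h2, hpY⟩ := hmem p hpP
      obtain ⟨hlp, hlpY⟩ := hlogp p hpP
      have hppR : Y < (p:ℝ) * p := by
        have : (N:ℝ) + 1 ≤ (p:ℝ) * (p:ℝ) := by exact_mod_cast hpp
        linarith
      have hhalf : Real.log Y ≤ 2 * Real.log p := by
        have := Real.log_le_log hY0 hppR.le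
        rwa [Real.log_mul (by linarith) (by linarith), ← two_mul] at this
      have hd : Real.log (Real.log Y) - Real.log (Real.log p)
          ≤ (Real.log Y - Real.log p) / Real.log p := by
        have hpos : (0:ℝ) < Real.log Y / Real.log p := by positivity
        have hle := Real.log_le_sub_one_of_pos hpos
        rw [Real.log_div hlogY.ne' hlp.ne'] at hle
        have e : Real.log Y / Real.log p - 1 = (Real.log Y - Real.log p) / Real.log p := by
          field_simp
        linarith
      have hd2 : (Real.log Y - Real.log p) / Real.log p
          ≤ 2 * (Real.log Y - Real.log p) / Real.log Y := by
        rw [div_le_div_iff₀ hlp hlogY]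
        nlinarith [hlpY, hhalf, hlp]
      have hd3 : 2 * (Real.log Y - Real.log p) / Real.log Y
          ≤ 2 * (Real.log ((N:ℝ)+1) - Real.log p) / Real.log Y := by
        gcongr
      linarith
    have h2 := Finset.sum_le_sum h1
    have h3 : ∑ p ∈ P.filter (fun p => ¬ p*p ≤ N),
          2 * (Real.log ((N:ℝ)+1) - Real.log p) / Real.log Y
        ≤ ∑ p ∈ P, 2 * (Real.log ((N:ℝ)+1) - Real.log p) / Real.log Y := by
      apply Finset.sum_le_sum_of_subset_of_nonneg (Finset.filter_subset _ _)
      intro p hp _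
      obtain ⟨hpr, hp2, hpY⟩ := hmem p hp
      have : Real.log p ≤ Real.log ((N:ℝ)+1) :=
        Real.log_le_log (by linarith) (by linarith)
      exact div_nonneg (by linarith) hlogY.le
    have h4 : ∑ p ∈ P, 2 * (Real.log ((N:ℝ)+1) - Real.log p) / Real.log Y
        = (2 / Real.log Y) * ∑ p ∈ P, (Real.log ((N:ℝ)+1) - Real.log p) := by
      rw [Finset.mul_sum]
      apply Finset.sum_congr rfl
      intro p _
      ring
    have h5 := swap_le N
    have h6 := Tsum_le (N+1) (by omega)
    have h6' : ∑ n ∈ Finset.range (N+1), (((Finset.Iic n).filter Nat.Prime).card : ℝ) / n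
        ≤ 18 * ((N:ℝ)+1) / Real.log ((N:ℝ)+1) := by
      have e : (((N+1 : ℕ)):ℝ) = (N:ℝ)+1 := by push_cast; ring
      rw [e] at h6
      exact h6
    have h7 : 18 * ((N:ℝ)+1) / Real.log ((N:ℝ)+1) ≤ 36 * Y / Real.log Y := by
      apply div_le_div₀ (by positivity) ?_ hlogY hlogM
      have hN1 : (N:ℝ) + 1 ≤ 2 * Y := by linarith
      linarith
    have hkey : ∑ p ∈ P, (Real.log ((N:ℝ)+1) - Real.log p) ≤ 36 * Y / Real.log Y :=
      (h5.trans h6').trans h7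
    have hfin : (2 / Real.log Y) * (36 * Y / Real.log Y) = 72 * Y / Real.log Y ^ 2 := by
      field_simp
      ring
    calc ∑ p ∈ P.filter (fun p => ¬ p*p ≤ N),
          (Real.log (Real.log Y) - Real.log (Real.log p))
        ≤ (2 / Real.log Y) * ∑ p ∈ P, (Real.log ((N:ℝ)+1) - Real.log p) := by
          rw [← h4]; exact h2.trans h3
      _ ≤ (2 / Real.log Y) * (36 * Y / Real.log Y) := by
          apply mul_le_mul_of_nonneg_left hkey (by positivity)
      _ = 72 * Y / Real.log Y ^ 2 := hfin
  -- combine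
  have e1 : 864 * Y / Real.log Y ^ 2 + 72 * Y / Real.log Y ^ 2
      = 936 * (Y / Real.log Y ^ 2) := by ring
  have e2 : 1000 * Y / Real.log Y ^ 2 = 1000 * (Y / Real.log Y ^ 2) := by ring
  have hpos : (0:ℝ) ≤ Y / Real.log Y ^ 2 := by positivity
  have hsmall := hSsmall.trans hsmall_final
  linarith [hsplit.symm.le, hsplit.le, hsmall, hSbig, e1.le, e2.le]
end
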